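/- In the uGF-unravelling D^u of an instance D, if t and t' are nodes of the unravelling tree with tail(t) = tail(t'), then there exists an automorphism ĥ of D^u that maps bag(t) onto bag(t') via the canonical isomorphism and satisfies ĥ(a)↑ = a↑ for every element a of D^u. -/

import Mathlib

/-- A relational signature. -/
structure Sig where
  Rel : Type
  ar : Rel → ℕ

/-- A relational atom (fact) over the signature `σ` with arguments in `V`. -/
abbrev Atm (σ : Sig) (V : Type) : Type := (R : σ.Rel) × (Fin (σ.ar R) → V)

/-- An interpretation (or instance): a set of facts. -/
abbrev Interp (σ : Sig) (V : Type) : Type := Set (Atm σ V)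

/-- The domain of an interpretation: the elements occurring in some fact. -/
def Interp.dom {σ : Sig} {V : Type} (A : Interp σ V) : Set V :=
  { v | ∃ f ∈ A, ∃ i, f.2 i = v }

/-- `h` is a homomorphism from `A` to `B`. -/
def IsHom {σ : Sig} {V W : Type} (A : Interp σ V) (B : Interp σ W) (h : V → W) : Prop :=
  ∀ f ∈ A, (⟨f.1, h ∘ f.2⟩ : Atm σ W) ∈ B

/-- An ontology, given semantically as the class of its models. -/
def Ont (σ : Sig) : Type 1 := ∀ W : Type, Interp σ W → Prop

/-- `(W, ι, B)` is a model of the ontology `O` and the instance `D` (with standard names: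
`ι` injective, and every fact of `D` holds in `B`). -/
def IsMod {σ : Sig} (O : Ont σ) {V W : Type} (D : Interp σ V) (ι : V → W)
    (B : Interp σ W) : Prop :=
  Function.Injective ι ∧ IsHom D B ι ∧ O W B

/-- A conjunctive query of arity `k`, given by its finite canonical database together with
the tuple of answer variables. -/
structure CQ (σ : Sig) (k : ℕ) where
  V : Type
  finV : Finite V
  facts : Interp σ V
  finFacts : facts.Finite
  ans : Fin k → V

/-- `t` is an answer to the CQ `q` in `B`. -/
def CQAns {σ : Sig} {k : ℕ} {W : Type} (B : Interp σ W) (q : CQ σ k)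
    (t : Fin k → W) : Prop :=
  ∃ h : q.V → W, IsHom q.facts B h ∧ h ∘ q.ans = t

/-- A union of conjunctive queries. -/
abbrev UCQ (σ : Sig) (k : ℕ) := List (CQ σ k)

/-- `t` is an answer to the UCQ `qs` in `B`. -/
def UCQAns {σ : Sig} {k : ℕ} {W : Type} (B : Interp σ W) (qs : UCQ σ k)
    (t : Fin k → W) : Prop :=
  ∃ q ∈ qs, CQAns B q t

/-- `a` is a certain answer to the CQ `q` on `D` given `O`. -/
def CertainCQ {σ : Sig} (O : Ont σ) {V : Type} {k : ℕ} (D : Interp σ V) (q : CQ σ k)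
    (a : Fin k → V) : Prop :=
  ∀ (W : Type) (ι : V → W) (B : Interp σ W), IsMod O D ι B → CQAns B q (ι ∘ a)

/-- `a` is a certain answer to the UCQ `qs` on `D` given `O`. -/
def CertainUCQ {σ : Sig} (O : Ont σ) {V : Type} {k : ℕ} (D : Interp σ V) (qs : UCQ σ k)
    (a : Fin k → V) : Prop :=
  ∀ (W : Type) (ι : V → W) (B : Interp σ W), IsMod O D ι B → UCQAns B qs (ι ∘ a)

/-- `D` is consistent w.r.t. `O`. -/
def Consistent {σ : Sig} (O : Ont σ) {V : Type} (D : Interp σ V) : Prop :=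
  ∃ (W : Type) (ι : V → W) (B : Interp σ W), IsMod O D ι B

/-- `(W, ι, B)` is a materialization of `O` and `D`: a model in which, for every union of
conjunctive queries and every tuple over the domain of `D`, the answers are exactly the
certain answers. -/
def IsMat {σ : Sig} (O : Ont σ) {V W : Type} (D : Interp σ V) (ι : V → W)
    (B : Interp σ W) : Prop :=
  IsMod O D ι B ∧ ∀ (k : ℕ) (qs : UCQ σ k) (a : Fin k → V), (∀ i, a i ∈ D.dom) →
    (UCQAns B qs (ι ∘ a) ↔ CertainUCQ O D qs a)
/-- A set `G` is guarded in `A` if it is a singleton of the domain or the set of arguments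
of some atom of `A`. -/
def IsGuarded {σ : Sig} {V : Type} (A : Interp σ V) (G : Set V) : Prop :=
  (∃ v ∈ A.dom, G = {v}) ∨ ∃ f ∈ A, G = Set.range f.2

/-- A maximal guarded set of `A`. -/
def IsMaxGuarded {σ : Sig} {V : Type} (A : Interp σ V) (G : Set V) : Prop :=
  IsGuarded A G ∧ ∀ G', IsGuarded A G' → G ⊆ G' → G = G'

/-- A node of the unravelling tree `T(D)`: a nonempty sequence `G_0 G_1 ⋯ G_n` of maximal
guarded sets of `D` with `G_i ≠ G_{i+1}`, `G_i ∩ G_{i+1} ≠ ∅` and `G_{i-1} ≠ G_{i+1}`.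
(The sequence is represented by the list whose head is `G_n = tail(t)`.) -/
def IsPath {σ : Sig} {V : Type} (D : Interp σ V) (l : List (Set V)) : Prop :=
  l ≠ [] ∧ (∀ G ∈ l, IsMaxGuarded D G) ∧
    l.Chain' (fun G G' => G ≠ G' ∧ (G ∩ G').Nonempty) ∧
    ∀ (i : ℕ) (h : i + 2 < l.length), l.get ⟨i, by omega⟩ ≠ l.get ⟨i + 2, h⟩

open Classical

/-- The birth node of (the copy in `bag(t)` of) the element `d`: the earliest node on the
path at which the copy of `d` occurring in `bag(t)` was introduced. -/
noncomputable def birth {V : Type} (l : List (Set V)) (d : V) : List (Set V) :=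
  match l with
  | [] => []
  | [G] => [G]
  | G :: G' :: rest =>
      if d ∈ G' then birth (G' :: rest) d else G :: G' :: rest

/-- The uGF-unravelling `D^u` of `D`: its elements are pairs `(t₀, d)` where `t₀` is the
birth node of a copy of `d ∈ dom(D)`, and for every node `t` and every atom of `D` whose
arguments all lie in `tail(t)`, `D^u` contains the corresponding atom on the copies in
`bag(t)`. -/
def Unrav {σ : Sig} {V : Type} (D : Interp σ V) : Interp σ (List (Set V) × V) :=
  { f | ∃ (t : List (Set V)) (R : σ.Rel) (args : Fin (σ.ar R) → V),
      IsPath D t ∧ (⟨R, args⟩ : Atm σ V) ∈ D ∧ (∀ i, args i ∈ t.headI) ∧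
      f = ⟨R, fun i => (birth t (args i), args i)⟩ }


section Aux

variable {σ : Sig} {V : Type} {D : Interp σ V}

lemma chainL_cons {R : Set V → Set V → Prop} {a b : Set V} {l : List (Set V)} :
    List.Chain R a (b :: l) ↔ R a b ∧ List.Chain R b l := List.isChain_cons_cons

/-- No two elements at distance 2 are equal. -/
def NoTwo (l : List (Set V)) : Prop := ∀ (i : ℕ) (h : i + 2 < l.length), l[i] ≠ l[i+2]

lemma isPath_iff (l : List (Set V)) : IsPath D l ↔
    l ≠ [] ∧ (∀ G ∈ l, IsMaxGuarded D G) ∧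
      l.Chain' (fun G G' => G ≠ G' ∧ (G ∩ G').Nonempty) ∧ NoTwo l := by
  unfold IsPath NoTwo
  simp [List.get_eq_getElem]


lemma noTwo_cons {a : Set V} {l : List (Set V)} (h : NoTwo (a :: l)) : NoTwo l := by
  intro i hi
  have := h (i+1) (by simp; omega)
  simpa using this

lemma noTwo_short {l : List (Set V)} (h : l.length ≤ 2) : NoTwo l := by
  intro i hi; omega

lemma isPath_tail {a : Set V} {l : List (Set V)} (h : IsPath D (a :: l)) (hne : l ≠ []) :
    IsPath D l := by
  rw [isPath_iff] at h ⊢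
  obtain ⟨-, hmem, hch, hnt⟩ := h
  exact ⟨hne, fun G hG => hmem G (List.mem_cons_of_mem _ hG),
    (List.isChain_cons.1 hch).2, noTwo_cons hnt⟩

lemma isPath_suffix {s l : List (Set V)} (h : IsPath D l) (hs : s <:+ l) (hne : s ≠ []) :
    IsPath D s := by
  obtain ⟨u, rfl⟩ := hs
  induction u with
  | nil => exact h
  | cons a u ih =>
      exact ih (isPath_tail h (by simp [hne]))

/-- Adjacency of maximal guarded sets (target side carries guardedness). -/
def Adj (D : Interp σ V) (G H : Set V) : Prop :=
  IsMaxGuarded D H ∧ H ≠ G ∧ (G ∩ H).Nonempty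

/-- One move in the tree of paths: pop if the label matches the second element,
otherwise push. -/
noncomputable def move : List (Set V) → Set V → List (Set V)
  | x :: y :: r, H => if y = H then y :: r else H :: x :: y :: r
  | l, H => H :: l

/-- Replay a word of moves. -/
noncomputable def replay (n w : List (Set V)) : List (Set V) := w.foldl move n

@[simp] lemma move_nil (H : Set V) : move [] H = [H] := rfl

@[simp] lemma move_single (x H : Set V) : move [x] H = [H, x] := rfl

lemma move_cons_cons (x y H : Set V) (r : List (Set V)) :
    move (x :: y :: r) H = if y = H then y :: r else H :: x :: y :: r := rfl

@[simp] lemma replay_nil (n : List (Set V)) : replay n [] = n := rfl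

lemma replay_cons (n : List (Set V)) (H : Set V) (w : List (Set V)) :
    replay n (H :: w) = replay (move n H) w := rfl

lemma replay_append (n : List (Set V)) (u v : List (Set V)) :
    replay n (u ++ v) = replay (replay n u) v := List.foldl_append

lemma move_path {n : List (Set V)} {H : Set V} (hn : IsPath D n) (ha : Adj D n.headI H) :
    IsPath D (move n H) ∧ (move n H).headI = H ∧ (move n H).getLast? = n.getLast? := by
  obtain ⟨hmg, hne, hint⟩ := ha
  rw [isPath_iff] at hn
  obtain ⟨hn0, hmem, hch, hnt⟩ := hn
  match n, hn0 with
  | [x], _ =>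
      rw [move_single]
      refine ⟨?_, rfl, rfl⟩
      rw [isPath_iff]
      refine ⟨by simp, ?_, ?_, noTwo_short (by simp)⟩
      · intro G hG
        rcases List.mem_cons.1 hG with rfl | hG
        · exact hmg
        · exact hmem G hG
      · refine List.isChain_cons_cons.2 ⟨⟨hne, Set.inter_comm x H ▸ hint⟩, List.isChain_singleton _⟩
  | x :: y :: r, _ =>
      simp only [List.headI] at hne hint
      by_cases hy : y = H
      · simp only [move_cons_cons, if_pos hy]
        subst hy
        refine ⟨?_, rfl, by simp [List.getLast?_cons_cons]⟩
        rw [isPath_iff]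
        exact ⟨by simp, fun G hG => hmem G (List.mem_cons_of_mem _ hG),
          (List.isChain_cons.1 hch).2, noTwo_cons hnt⟩
      · simp only [move_cons_cons, if_neg hy]
        refine ⟨?_, rfl, by simp [List.getLast?_cons_cons]⟩
        rw [isPath_iff]
        refine ⟨by simp, ?_, ?_, ?_⟩
        · intro G hG
          rcases List.mem_cons.1 hG with rfl | hG
          · exact hmg
          · exact hmem G hG
        · exact List.isChain_cons_cons.2 ⟨⟨hne, Set.inter_comm x H ▸ hint⟩, hch⟩
        · intro i hi
          match i with
          | 0 => simpa using Ne.symm hy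
          | (j+1) =>
              have := hnt j (by simpa using Nat.lt_of_succ_lt_succ hi)
              simpa using this

lemma replay_spec {n w : List (Set V)} (hn : IsPath D n)
    (hc : List.Chain (Adj D) n.headI w) :
    IsPath D (replay n w) ∧ (replay n w).headI = w.getLastD n.headI ∧
      (replay n w).getLast? = n.getLast? := by
  induction w generalizing n with
  | nil => exact ⟨hn, rfl, rfl⟩
  | cons H w ih =>
      rw [chainL_cons] at hc
      obtain ⟨h1, h2⟩ := hc
      obtain ⟨hp, hh, hl⟩ := move_path hn h1
      rw [replay_cons]
      obtain ⟨p1, p2, p3⟩ := ih hp (by rw [hh]; exact h2)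
      exact ⟨p1, by rw [p2, hh, List.getLastD_cons], p3.trans hl⟩

lemma move_move {n : List (Set V)} {H : Set V} (hn : IsPath D n) (hne : H ≠ n.headI) :
    move (move n H) n.headI = n := by
  rw [isPath_iff] at hn
  obtain ⟨hn0, -, hch, hnt⟩ := hn
  match n, hn0 with
  | [x], _ =>
      simp only [List.headI] at hne ⊢
      simp [move_cons_cons, hne]
  | [x, y], _ =>
      simp only [List.headI] at hne ⊢
      by_cases hy : y = H
      · subst hy; simp [move_cons_cons, hne]
      · simp [move_cons_cons, hy]
  | x :: y :: z :: r, _ =>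
      simp only [List.headI] at hne ⊢
      have hxz : x ≠ z := by have := hnt 0 (by simp); simpa using this
      by_cases hy : y = H
      · subst hy
        simp [move_cons_cons, hne, Ne.symm hxz]
      · simp [move_cons_cons, hy]

lemma chain_append_iff {R : Set V → Set V → Prop} {x : Set V} {u v : List (Set V)} :
    List.Chain R x (u ++ v) ↔ List.Chain R x u ∧ List.Chain R (u.getLastD x) v := by
  induction u generalizing x with
  | nil => simp [List.Chain.nil]
  | cons c u ih =>
      rw [List.cons_append, chainL_cons, chainL_cons, ih, List.getLastD_cons, and_assoc]

lemma getLastD_take {w : List (Set V)} {x : Set V} {i : ℕ} (h : i ≤ w.length) :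
    (w.take i).getLastD x = (x :: w)[i]'(by simp; omega) := by
  induction i generalizing x w with
  | zero => simp
  | succ j ih =>
      cases w with
      | nil => simp at h
      | cons c w' =>
          simp only [List.take_succ_cons, List.getLastD_cons]
          have := ih (w := w') (x := c) (by simpa using h)
          simpa using this

lemma chain_getElem {R : Set V → Set V → Prop} {a : Set V} {l : List (Set V)}
    (h : List.Chain R a l) (i : ℕ) (hi : i < l.length) :
    R ((a :: l)[i]'(by simp; omega)) (l[i]) := by
  have := List.IsChain.getElem (l := a :: l) h i (by simp; omega)
  simpa using this

lemma replay_pushes : ∀ (w : List (Set V)) (H : Set V) (n : List (Set V)), n ≠ [] →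
    NoTwo (n.headI :: H :: w) → replay (H :: n) w = w.reverse ++ H :: n := by
  intro w
  induction w with
  | nil => intro H n _ _; simp
  | cons K w ih =>
      intro H n hn hnt
      match n, hn with
      | n0 :: nt, _ =>
        have h02 : n0 ≠ K := by have := hnt 0 (by simp); simpa using this
        have hmv : move (H :: n0 :: nt) K = K :: H :: n0 :: nt := by
          rw [move_cons_cons, if_neg h02]
        rw [replay_cons, hmv]
        have hnt' : NoTwo ((K :: H :: n0 :: nt).headI :: w) := by
          have := noTwo_cons (l := H :: K :: w) hnt
          -- this : NoTwo (H :: K :: w) ; need NoTwo (K :: w)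
          exact noTwo_cons this
        have ih' := ih K (H :: n0 :: nt) (by simp)
          (by simpa using noTwo_cons (l := H :: K :: w) hnt)
        rw [ih']; simp

lemma normal_form : ∀ (w n : List (Set V)), IsPath D n →
    List.Chain (Adj D) n.headI w → NoTwo (n.headI :: w) →
    ∃ p q, p + 1 ≤ n.length ∧ w = (n.drop 1).take p ++ q ∧
      replay n w = q.reverse ++ n.drop p := by
  intro w
  induction w with
  | nil =>
      intro n hn _ _
      exact ⟨0, [], by have := List.length_pos_iff.2 hn.1; omega, by simp, by simp⟩
  | cons H w ih =>
      intro n hn hc hnt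
      have hn0 : n ≠ [] := hn.1
      have hpush : move n H = H :: n →
          ∃ p q, p + 1 ≤ n.length ∧ H :: w = (n.drop 1).take p ++ q ∧
            replay n (H :: w) = q.reverse ++ n.drop p := by
        intro hmv
        refine ⟨0, H :: w, by have := List.length_pos_iff.2 hn0; omega, by simp, ?_⟩
        rw [replay_cons, hmv, replay_pushes w H n hn0 hnt]
        simp
      match n, hn0 with
      | [x], _ => exact hpush rfl
      | x :: y :: r, _ =>
          by_cases hy : y = H
          · subst hy
            have hmv : move (x :: y :: r) y = y :: r := by rw [move_cons_cons, if_pos rfl]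
            have hc' : List.Chain (Adj D) (y :: r).headI w := by
              have := (List.chain_cons.1 hc).2; exact this
            have hnt' : NoTwo ((y :: r).headI :: w) := by
              simpa using noTwo_cons (l := y :: w) hnt
            obtain ⟨p, q, hp, hw, hr⟩ := ih (y :: r) (isPath_tail hn (by simp)) hc' hnt'
            refine ⟨p + 1, q, by simpa using hp, ?_, ?_⟩
            · simp only [List.drop_one, List.tail_cons, List.take_succ_cons]
              rw [List.drop_one] at hw
              simp only [List.tail_cons] at hw
              rw [hw]; rfl
            · rw [replay_cons, hmv, hr]
              simp [List.drop_succ_cons]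
          · exact hpush (by rw [move_cons_cons, if_neg hy])

lemma headI_getElem {n : List (Set V)} (h : n ≠ []) :
    n.headI = n[0]'(List.length_pos_iff.2 h) := by
  cases n with
  | nil => exact absurd rfl h
  | cons a l => rfl

lemma seq_getElem {n q : List (Set V)} {p j : ℕ} (hp : p + 1 ≤ n.length) (hj : j ≤ p) :
    (n.headI :: ((n.drop 1).take p ++ q))[j]'(by
      simp only [List.length_cons, List.length_append, List.length_take,
        List.length_drop]; omega) = n[j]'(by omega) := by
  match j with
  | 0 =>
      have : n ≠ [] := by intro h; subst h; simp at hp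
      simpa using headI_getElem this
  | k+1 =>
      have hlt : k < ((n.drop 1).take p).length := by
        simp only [List.length_take, List.length_drop]; omega
      rw [List.getElem_cons_succ, List.getElem_append_left hlt, List.getElem_take,
        List.getElem_drop]
      congr 1
      omega

lemma nf_neq {n q q' : List (Set V)} {p p' : ℕ} (hp : p + 1 ≤ n.length)
    (hp' : p' + 1 ≤ n.length)
    (hr' : NoTwo (n.headI :: ((n.drop 1).take p' ++ q')))
    (he : q.reverse ++ n.drop p = q'.reverse ++ n.drop p') (hlt : p < p') : False := by
  have hmid : (n.drop p).take (p' - p) ++ n.drop p' = n.drop p := by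
    have := List.take_append_drop (p' - p) (n.drop p)
    rwa [List.drop_drop, Nat.add_sub_cancel' (le_of_lt hlt)] at this
  have hcancel : q.reverse ++ (n.drop p).take (p' - p) = q'.reverse := by
    apply List.append_cancel_right (bs := n.drop p')
    rw [List.append_assoc, hmid, he]
  have hq' : q' = ((n.drop p).take (p' - p)).reverse ++ q := by
    have := congrArg List.reverse hcancel
    simpa using this.symm
  have hmidlen : ((n.drop p).take (p' - p)).length = p' - p := by
    simp only [List.length_take, List.length_drop]; omega
  have hq'len : 0 < q'.length := by
    rw [hq']
    simp only [List.length_append, List.length_reverse, hmidlen]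
    omega
  -- q'[0] = n[p' - 1]
  have hq'0 : q'[0]'(hq'len) = n[p' - 1]'(by omega) := by
    rw [List.getElem_of_eq hq' hq'len]
    have h1 : (0 : ℕ) < ((n.drop p).take (p' - p)).reverse.length := by
      simp only [List.length_reverse, hmidlen]; omega
    rw [List.getElem_append_left h1, List.getElem_reverse, List.getElem_take,
      List.getElem_drop]
    congr 1
    simp only [List.length_take, List.length_drop]
    omega
  -- NoTwo violation at index p' - 1
  have hlen : p' - 1 + 2 < (n.headI :: ((n.drop 1).take p' ++ q')).length := by
    simp only [List.length_cons, List.length_append, List.length_take, List.length_drop]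
    omega
  have hp'eq : p' - 1 + 2 = p' + 1 := by omega
  have hne2 := hr' (p' - 1) hlen
  simp only [hp'eq] at hne2
  apply hne2
  have e1 := seq_getElem (n := n) (q := q') (p := p') (j := p' - 1) hp' (by omega)
  have htk : ((n.drop 1).take p').length = p' := by
    simp only [List.length_take, List.length_drop]; omega
  have e2 : (n.headI :: ((n.drop 1).take p' ++ q'))[p' + 1]'(by omega) = q'[0]'hq'len := by
    rw [List.getElem_cons_succ, List.getElem_append_right (by omega)]
    have hmin : p' ⊓ (n.length - 1) = p' := by omega
    simp [hmin]
  rw [e1, e2, hq'0]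

lemma word_unique {n w₁ w₂ : List (Set V)} (hn : IsPath D n)
    (hc₁ : List.Chain (Adj D) n.headI w₁) (hr₁ : NoTwo (n.headI :: w₁))
    (hc₂ : List.Chain (Adj D) n.headI w₂) (hr₂ : NoTwo (n.headI :: w₂))
    (he : replay n w₁ = replay n w₂) : w₁ = w₂ := by
  obtain ⟨p₁, q₁, hp₁, hw₁, hrep₁⟩ := normal_form w₁ n hn hc₁ hr₁
  obtain ⟨p₂, q₂, hp₂, hw₂, hrep₂⟩ := normal_form w₂ n hn hc₂ hr₂
  have heq : q₁.reverse ++ n.drop p₁ = q₂.reverse ++ n.drop p₂ := by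
    rw [← hrep₁, ← hrep₂, he]
  have hpp : p₁ = p₂ := by
    rcases lt_trichotomy p₁ p₂ with h | h | h
    · exact absurd (nf_neq hp₁ hp₂ (hw₂ ▸ hr₂) heq h) (fun x => x)
    · exact h
    · exact absurd (nf_neq hp₂ hp₁ (hw₁ ▸ hr₁) heq.symm h) (fun x => x)
  subst hpp
  have : q₁.reverse = q₂.reverse := List.append_cancel_right heq
  have hq : q₁ = q₂ := List.reverse_inj.1 this
  rw [hw₁, hw₂, hq]

lemma reduce {n : List (Set V)} (hn : IsPath D n) :
    ∀ w, List.Chain (Adj D) n.headI w →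
    ∃ w', List.Chain (Adj D) n.headI w' ∧ NoTwo (n.headI :: w') ∧
      replay n w' = replay n w := by
  have main : ∀ (m : ℕ) (w : List (Set V)), w.length = m →
      List.Chain (Adj D) n.headI w →
      ∃ w', List.Chain (Adj D) n.headI w' ∧ NoTwo (n.headI :: w') ∧
        replay n w' = replay n w := by
    intro m
    induction m using Nat.strong_induction_on with
    | _ m ihm =>
      intro w hm hc
      by_cases hred : NoTwo (n.headI :: w)
      · exact ⟨w, hc, hred, rfl⟩
      · simp only [NoTwo, not_forall, not_not] at hred
        obtain ⟨i, hi, heq⟩ := hred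
        simp only [List.length_cons] at hi
        have hi1 : i + 1 < w.length := by omega
        set u := w.take i with hu
        set a := w[i]'(by omega) with ha
        set b := w[i+1]'hi1 with hb
        set v := w.drop (i+2) with hv
        have hdrop : w.drop i = a :: b :: v := by
          rw [List.drop_eq_getElem_cons (show i < w.length by omega),
            List.drop_eq_getElem_cons (show i + 1 < w.length from hi1)]
        have hw : w = u ++ a :: b :: v := by
          conv_lhs => rw [← List.take_append_drop i w]
          rw [hdrop]
        -- the element before the removed pair equals b
        have hseqb : (n.headI :: w)[i]'(by simp; omega) = b := by
          rw [heq, List.getElem_cons_succ]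
        have hgl : u.getLastD n.headI = b := by
          rw [hu, getLastD_take (by omega)]
          exact hseqb
        -- decompose the chain
        rw [hw, chain_append_iff, chainL_cons, chainL_cons] at hc
        obtain ⟨hcu, hadja, hadjb, hcv⟩ := hc
        have hcuv : List.Chain (Adj D) n.headI (u ++ v) :=
          chain_append_iff.2 ⟨hcu, by rw [hgl]; exact hcv⟩
        have hm' : IsPath D (replay n u) ∧ (replay n u).headI = u.getLastD n.headI ∧ _ :=
          replay_spec hn hcu
        have hrepeq : replay n (u ++ v) = replay n w := by
          have hmh : (replay n u).headI = b := hm'.2.1.trans hgl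
          have hane : a ≠ (replay n u).headI := by
            rw [hmh, ← hgl]
            exact hadja.2.1
          have hundo := move_move (n := replay n u) (H := a) hm'.1 hane
          rw [hmh] at hundo
          calc replay n (u ++ v) = replay (replay n u) v := replay_append n u v
            _ = replay (move (move (replay n u) a) b) v := by rw [hundo]
            _ = replay (replay n u) (a :: b :: v) := by rw [replay_cons, replay_cons]
            _ = replay n (u ++ a :: b :: v) := (replay_append n u _).symm
            _ = replay n w := by rw [← hw]
        have hlen : (u ++ v).length < m := by
          subst hm
          rw [List.length_append, hu, hv]
          simp only [List.length_take, List.length_drop]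
          omega
        obtain ⟨w', hw1, hw2, hw3⟩ := ihm _ hlen (u ++ v) rfl hcuv
        exact ⟨w', hw1, hw2, hw3.trans hrepeq⟩
  intro w hc
  exact main w.length w rfl hc

lemma chain_of_path {l : List (Set V)} (h : IsPath D l) :
    List.Chain (Adj D) l.headI l.tail := by
  induction l with
  | nil => simp [List.Chain.nil]
  | cons x l ih =>
      cases l with
      | nil => simp [List.Chain.nil]
      | cons y r =>
          have h' := h
          rw [isPath_iff] at h'
          obtain ⟨-, hmem, hch, -⟩ := h'
          have hpair := (List.isChain_cons_cons.1 hch).1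
          refine chainL_cons.2 ⟨⟨hmem y (by simp), Ne.symm hpair.1, hpair.2⟩, ?_⟩
          exact ih (isPath_tail h (by simp))

lemma noTwo_reverse {l : List (Set V)} (h : NoTwo l) : NoTwo l.reverse := by
  intro i hi
  rw [List.length_reverse] at hi
  rw [List.getElem_reverse, List.getElem_reverse]
  have hj := h (l.length - 1 - (i+2)) (by omega)
  have e : l.length - 1 - (i+2) + 2 = l.length - 1 - i := by omega
  simp only [e] at hj
  exact fun heq => hj heq.symm

lemma path_reverse {l : List (Set V)} (h : IsPath D l) : IsPath D l.reverse := by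
  rw [isPath_iff] at h ⊢
  obtain ⟨h0, hmem, hch, hnt⟩ := h
  refine ⟨by simpa using h0, by simpa using hmem, ?_, noTwo_reverse hnt⟩
  show List.IsChain _ l.reverse
  rw [List.isChain_reverse]
  exact List.IsChain.imp (fun a b hab => ⟨Ne.symm hab.1, Set.inter_comm a b ▸ hab.2⟩) hch

lemma replay_pops : ∀ (l : List (Set V)) (x : Set V),
    replay (x :: l) l = [l.getLastD x] := by
  intro l
  induction l with
  | nil => intro x; rfl
  | cons y r ih =>
      intro x
      rw [replay_cons, move_cons_cons, if_pos rfl, ih y]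
      simp [List.getLastD_cons, List.getLastD_eq_getLast?, List.getLast?_cons]

lemma replay_unpop : ∀ (b : List (Set V)) (G : Set V), NoTwo (b ++ [G]) →
    replay [G] b.reverse = b ++ [G] := by
  intro b
  induction b with
  | nil => intro G _; rfl
  | cons z b ih =>
      intro G hnt
      have hnt' : NoTwo (b ++ [G]) := noTwo_cons (a := z) (by simpa using hnt)
      rw [List.reverse_cons, replay_append, ih G hnt']
      show move (b ++ [G]) z = (z :: b) ++ [G]
      cases b with
      | nil => rfl
      | cons c b' =>
          cases hb : b' ++ [G] with
          | nil => simp at hb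
          | cons d rest =>
              have hz : z ≠ d := by
                have h02 := hnt 0 (by simp)
                simp only [List.cons_append, hb] at h02
                simpa using h02
              simp only [List.cons_append, hb, move_cons_cons, if_neg (Ne.symm hz)]

lemma word_exists {t s : List (Set V)} (ht : IsPath D t) (hs : IsPath D s)
    (hlast : s.getLast? = t.getLast?) :
    ∃ w, List.Chain (Adj D) t.headI w ∧ NoTwo (t.headI :: w) ∧ replay t w = s := by
  have ht0 := ht.1
  have hs0 := hs.1
  obtain ⟨G, hG⟩ : ∃ G, s.getLast? = some G := ⟨s.getLast hs0, List.getLast?_eq_getLast hs0⟩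
  have hGL : s.getLast hs0 = G := by
    rw [List.getLast?_eq_getLast hs0] at hG
    exact Option.some_inj.1 hG
  have hsG : s.dropLast ++ [G] = s := by
    rw [← hGL]
    exact List.dropLast_append_getLast hs0
  have htG : t.getLast? = some G := by rw [← hlast]; exact hG
  -- chain for the unreduced word
  have hchain : List.Chain (Adj D) t.headI (t.drop 1 ++ s.dropLast.reverse) := by
    rw [chain_append_iff]
    constructor
    · rw [List.drop_one]; exact chain_of_path ht
    · have hgl : (t.drop 1).getLastD t.headI = G := by
        cases t with
        | nil => exact absurd rfl ht0
        | cons x l =>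
            rw [List.getLast?_cons] at htG
            have := Option.some_inj.1 htG
            simpa [List.getLastD_eq_getLast?] using this
      rw [hgl]
      have hrev := chain_of_path (path_reverse hs)
      have hsrev : s.reverse = G :: s.dropLast.reverse := by
        conv_lhs => rw [← hsG]
        simp
      rw [hsrev] at hrev
      simpa using hrev
  have hrepl : replay t (t.drop 1 ++ s.dropLast.reverse) = s := by
    rw [replay_append]
    have hpops : replay t (t.drop 1) = [G] := by
      cases t with
      | nil => exact absurd rfl ht0
      | cons x l =>
          have h1 := replay_pops l x
          rw [List.getLast?_cons] at htG
          have h2 := Option.some_inj.1 htG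
          rw [List.getLastD_eq_getLast?] at h1
          rw [h2] at h1
          simpa using h1
    rw [hpops, replay_unpop s.dropLast G (by rw [hsG]; exact ((isPath_iff s).1 hs).2.2.2), hsG]
  obtain ⟨w, h1, h2, h3⟩ := reduce ht _ hchain
  exact ⟨w, h1, h2, h3.trans hrepl⟩

lemma noTwo_append_left {u v : List (Set V)} (h : NoTwo (u ++ v)) : NoTwo u := by
  intro i hi
  have hlt : i + 2 < (u ++ v).length := by simp only [List.length_append]; omega
  have := h i hlt
  rwa [List.getElem_append_left (by omega), List.getElem_append_left (by omega)] at this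

variable (D) in
/-- The reduced word leading from `t` to `s` in the tree of paths. -/
noncomputable def theWord (t s : List (Set V)) : List (Set V) :=
  if h : ∃ w, List.Chain (Adj D) t.headI w ∧ NoTwo (t.headI :: w) ∧ replay t w = s
  then h.choose else []

lemma theWord_spec {t s : List (Set V)} (ht : IsPath D t) (hs : IsPath D s)
    (hlast : s.getLast? = t.getLast?) :
    List.Chain (Adj D) t.headI (theWord D t s) ∧ NoTwo (t.headI :: theWord D t s) ∧
      replay t (theWord D t s) = s := by
  have h := word_exists ht hs hlast
  rw [theWord, dif_pos h]
  exact h.choose_spec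

lemma theWord_eq {t s w : List (Set V)} (ht : IsPath D t) (hs : IsPath D s)
    (hlast : s.getLast? = t.getLast?) (hc : List.Chain (Adj D) t.headI w)
    (hr : NoTwo (t.headI :: w)) (he : replay t w = s) : theWord D t s = w := by
  obtain ⟨c1, c2, c3⟩ := theWord_spec ht hs hlast
  exact word_unique ht c1 c2 hc hr (c3.trans he.symm)

variable (D) in
/-- The tree automorphism induced by the pair `t`, `t'`. -/
noncomputable def hmap (t t' s : List (Set V)) : List (Set V) := replay t' (theWord D t s)

lemma hmap_spec {t t' s : List (Set V)} (ht : IsPath D t) (ht' : IsPath D t')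
    (hh : t.headI = t'.headI) (hs : IsPath D s) (hlast : s.getLast? = t.getLast?) :
    IsPath D (hmap D t t' s) ∧ (hmap D t t' s).headI = s.headI ∧
      (hmap D t t' s).getLast? = t'.getLast? := by
  obtain ⟨c1, c2, c3⟩ := theWord_spec ht hs hlast
  have c1' : List.Chain (Adj D) t'.headI (theWord D t s) := hh ▸ c1
  obtain ⟨p1, p2, p3⟩ := replay_spec ht' c1'
  refine ⟨p1, ?_, p3⟩
  obtain ⟨q1, q2, q3⟩ := replay_spec ht c1
  rw [c3] at q2
  simp only [hmap]
  rw [p2, q2, hh]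

lemma hmap_inv {t t' s : List (Set V)} (ht : IsPath D t) (ht' : IsPath D t')
    (hh : t.headI = t'.headI) (hs : IsPath D s) (hlast : s.getLast? = t.getLast?) :
    hmap D t' t (hmap D t t' s) = s := by
  obtain ⟨c1, c2, c3⟩ := theWord_spec ht hs hlast
  obtain ⟨m1, m2, m3⟩ := hmap_spec ht ht' hh hs hlast
  have hW : theWord D t' (hmap D t t' s) = theWord D t s :=
    theWord_eq ht' m1 m3 (hh ▸ c1) (hh ▸ c2) rfl
  rw [hmap, hW, c3]

lemma hmap_self {t t' : List (Set V)} (ht : IsPath D t) :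
    hmap D t t' t = t' := by
  have hW : theWord D t t = [] :=
    theWord_eq ht ht rfl List.Chain.nil (noTwo_short (by simp)) rfl
  rw [hmap, hW, replay_nil]

lemma hmap_move {t t' s : List (Set V)} {H : Set V} (ht : IsPath D t) (ht' : IsPath D t')
    (hh : t.headI = t'.headI) (hs : IsPath D s) (hlast : s.getLast? = t.getLast?)
    (ha : Adj D s.headI H) :
    hmap D t t' (move s H) = move (hmap D t t' s) H := by
  obtain ⟨c1, c2, c3⟩ := theWord_spec ht hs hlast
  set w := theWord D t s with hwdef
  obtain ⟨m1, m2, m3⟩ := move_path hs ha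
  have hlast2 : (move s H).getLast? = t.getLast? := m3.trans hlast
  have hsh : w.getLastD t.headI = s.headI := by
    obtain ⟨q1, q2, q3⟩ := replay_spec ht c1
    rw [c3] at q2
    exact q2.symm
  by_cases hred : NoTwo (t.headI :: (w ++ [H]))
  · have hc' : List.Chain (Adj D) t.headI (w ++ [H]) := by
      rw [chain_append_iff]
      exact ⟨c1, by rw [hsh]; exact List.chain_cons.2 ⟨ha, List.Chain.nil⟩⟩
    have he' : replay t (w ++ [H]) = move s H := by
      rw [replay_append, c3]
      rfl
    have hW : theWord D t (move s H) = w ++ [H] := theWord_eq ht m1 hlast2 hc' hred he'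
    rw [hmap, hW, replay_append]
    rfl
  · -- the new letter undoes the last letter of `w`
    have hw0 : w ≠ [] := by
      intro h
      rw [h] at hred
      exact hred (noTwo_short (by simp))
    simp only [NoTwo, not_forall, not_not] at hred
    obtain ⟨i, hi, heq⟩ := hred
    have hilen : i + 2 < w.length + 2 := by simpa using hi
    have hnotlt : ¬ (i + 2 < w.length + 1) := by
      intro hcase
      apply c2 i (by simpa using hcase)
      have e1 : (t.headI :: (w ++ [H]))[i]'(by simp; omega) =
          (t.headI :: w)[i]'(by simp; omega) :=
        List.getElem_append_left (as := t.headI :: w) (bs := [H]) (by simp; omega)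
      have e2 : (t.headI :: (w ++ [H]))[i+2]'(by simp; omega) =
          (t.headI :: w)[i+2]'(by simp; omega) :=
        List.getElem_append_left (as := t.headI :: w) (bs := [H]) (by simp; omega)
      exact e1.symm.trans (heq.trans e2)
    have hi2 : i = w.length - 1 := by omega
    have hwl1 : 1 ≤ w.length := by
      have := List.length_pos_iff.2 hw0
      omega
    -- extract that the end of the word equals H
    have e2 : (t.headI :: (w ++ [H]))[i+2]'(by simp; omega) = H := by
      show ((t.headI :: w) ++ [H])[i+2]'(by simp; omega) = H
      rw [List.getElem_append_right (by simp; omega)]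
      simp
    have e1 : (t.headI :: (w ++ [H]))[i]'(by simp; omega) =
        (t.headI :: w)[i]'(by simp; omega) :=
      List.getElem_append_left (as := t.headI :: w) (bs := [H]) (by simp; omega)
    have heqH : (t.headI :: w)[i]'(by simp; omega) = H := e1.symm.trans (heq.trans e2)
    set w₁ := w.dropLast with hw1def
    set L := w.getLast hw0 with hLdef
    have hwsplit : w₁ ++ [L] = w := List.dropLast_append_getLast hw0
    have hcc : List.Chain (Adj D) t.headI (w₁ ++ [L]) := by rw [hwsplit]; exact c1
    rw [chain_append_iff] at hcc
    obtain ⟨hc1, hc2⟩ := hcc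
    have hr1 : NoTwo (t.headI :: w₁) := by
      apply noTwo_append_left (v := [L])
      have : (t.headI :: w₁) ++ [L] = t.headI :: w := by
        rw [List.cons_append, hwsplit]
      rw [this]
      exact c2
    have hH : w₁.getLastD t.headI = H := by
      rw [hw1def, List.dropLast_eq_take, getLastD_take (by omega)]
      simp only [show w.length - 1 = i from by omega]
      exact heqH
    have hadjL : Adj D H L := by
      have := (List.chain_cons.1 hc2).1
      rwa [hH] at this
    have hLne : L ≠ H := hadjL.2.1
    -- node reached by the truncated word, from t and from t'
    obtain ⟨pt1, pt2, pt3⟩ := replay_spec ht hc1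
    have hc1' : List.Chain (Adj D) t'.headI w₁ := hh ▸ hc1
    obtain ⟨pt1', pt2', pt3'⟩ := replay_spec ht' hc1'
    have hmtH : (replay t w₁).headI = H := by rw [pt2, hH]
    have hmtH' : (replay t' w₁).headI = H := by
      rw [pt2', ← hh, hH]
    have hsplit_rep : ∀ x : List (Set V), replay x w = move (replay x w₁) L := by
      intro x
      rw [← hwsplit, replay_append]
      rfl
    have hms : move s H = replay t w₁ := by
      rw [← c3, hsplit_rep t]
      have := move_move (n := replay t w₁) (H := L) pt1 (by rw [hmtH]; exact hLne)
      rw [hmtH] at this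
      exact this
    have hW : theWord D t (move s H) = w₁ := by
      rw [hms]
      exact theWord_eq ht pt1 pt3 hc1 hr1 rfl
    rw [hmap, hW]
    -- RHS
    have hrhs : hmap D t t' s = replay t' w := rfl
    rw [hrhs, hsplit_rep t']
    have := move_move (n := replay t' w₁) (H := L) pt1' (by rw [hmtH']; exact hLne)
    rw [hmtH'] at this
    rw [this]

lemma birth_nil (d : V) : birth ([] : List (Set V)) d = [] := rfl

lemma birth_single (G : Set V) (d : V) : birth [G] d = [G] := rfl

lemma birth_cons_cons (G G' : Set V) (rest : List (Set V)) (d : V) :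
    birth (G :: G' :: rest) d = if d ∈ G' then birth (G' :: rest) d else G :: G' :: rest :=
  rfl

lemma birth_suffix (l : List (Set V)) (d : V) : birth l d <:+ l := by
  induction l with
  | nil => simp [birth_nil]
  | cons G l ih =>
      cases l with
      | nil => exact List.suffix_refl _
      | cons G' rest =>
          rw [birth_cons_cons]
          by_cases hd : d ∈ G'
          · rw [if_pos hd]
            exact ih.trans (List.suffix_cons G _)
          · rw [if_neg hd]

lemma birth_ne_nil {l : List (Set V)} (d : V) (h : l ≠ []) : birth l d ≠ [] := by
  induction l with
  | nil => exact absurd rfl h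
  | cons G l ih =>
      cases l with
      | nil => simp [birth_single]
      | cons G' rest =>
          rw [birth_cons_cons]
          by_cases hd : d ∈ G'
          · rw [if_pos hd]; exact ih (by simp)
          · rw [if_neg hd]; simp

lemma birth_headI_mem {l : List (Set V)} {d : V} (h : d ∈ l.headI) :
    d ∈ (birth l d).headI := by
  induction l with
  | nil => simpa [birth_nil] using h
  | cons G l ih =>
      cases l with
      | nil => simpa [birth_single] using h
      | cons G' rest =>
          rw [birth_cons_cons]
          by_cases hd : d ∈ G'
          · rw [if_pos hd]; exact ih hd
          · rw [if_neg hd]; simpa using h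

lemma birth_idem (l : List (Set V)) (d : V) : birth (birth l d) d = birth l d := by
  induction l with
  | nil => rfl
  | cons G l ih =>
      cases l with
      | nil => rfl
      | cons G' rest =>
          rw [birth_cons_cons]
          by_cases hd : d ∈ G'
          · rw [if_pos hd]; exact ih
          · rw [if_neg hd, birth_cons_cons, if_neg hd]

lemma suffix_getLast? {s l : List (Set V)} (hs : s <:+ l) (h : s ≠ []) :
    s.getLast? = l.getLast? := by
  obtain ⟨u, rfl⟩ := hs
  obtain ⟨G, hG⟩ : ∃ G, s.getLast? = some G := ⟨s.getLast h, List.getLast?_eq_getLast h⟩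
  rw [List.getLast?_append, hG]
  rfl

lemma birth_getLast? {l : List (Set V)} (d : V) (h : l ≠ []) :
    (birth l d).getLast? = l.getLast? :=
  suffix_getLast? (birth_suffix l d) (birth_ne_nil d h)

lemma birth_move {M : List (Set V)} {x : Set V} {d : V}
    (hdx : d ∈ x) (hdh : d ∈ M.headI) (hM : M ≠ []) :
    birth (move M x) d = birth M d := by
  match M with
  | [m0] =>
      rw [move_single, birth_cons_cons, if_pos (show d ∈ m0 from hdh)]
  | m0 :: m1 :: mr =>
      rw [move_cons_cons]
      by_cases hmx : m1 = x
      · rw [if_pos hmx]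
        conv_rhs => rw [birth_cons_cons, if_pos (show d ∈ m1 by rw [hmx]; exact hdx)]
      · rw [if_neg hmx]
        rw [birth_cons_cons (G := x), if_pos (show d ∈ m0 from hdh)]

lemma birth_hmap {t t' : List (Set V)} (ht : IsPath D t) (ht' : IsPath D t')
    (hh : t.headI = t'.headI) :
    ∀ (n : List (Set V)), IsPath D n → n.getLast? = t.getLast? → ∀ d ∈ n.headI,
      birth (hmap D t t' n) d = birth (hmap D t t' (birth n d)) d := by
  intro n
  induction n with
  | nil => intro hp; exact absurd rfl hp.1
  | cons x l ih =>
      cases l with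
      | nil =>
          intro _ _ d _
          rw [birth_single]
      | cons y r =>
          intro hp hlast d hd
          by_cases hdy : d ∈ y
          · have hb : birth (x :: y :: r) d = birth (y :: r) d := by
              rw [birth_cons_cons, if_pos hdy]
            rw [hb]
            have hyr : IsPath D (y :: r) := isPath_tail hp (by simp)
            have hlast' : (y :: r).getLast? = t.getLast? := by
              rw [← hlast]
              simp [List.getLast?_cons_cons]
            have hp' := hp
            rw [isPath_iff] at hp'
            obtain ⟨-, hmem, hch, hnt⟩ := hp'
            have hadj : Adj D (y :: r).headI x := by
              refine ⟨hmem x (by simp), ?_, ?_⟩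
              · have : x ≠ y := (List.isChain_cons_cons.1 hch).1.1
                simpa using this
              · have : (x ∩ y).Nonempty := (List.isChain_cons_cons.1 hch).1.2
                rw [Set.inter_comm] at this
                simpa using this
            have hmv : move (y :: r) x = x :: y :: r := by
              cases r with
              | nil => rfl
              | cons z r' =>
                  have hxz : x ≠ z := by have := hnt 0 (by simp); simpa using this
                  rw [move_cons_cons, if_neg (Ne.symm hxz)]
            have heqv : hmap D t t' (x :: y :: r) = move (hmap D t t' (y :: r)) x := by
              rw [← hmv]
              exact hmap_move ht ht' hh hyr hlast' hadj
            obtain ⟨hM1, hM2, hM3⟩ := hmap_spec ht ht' hh hyr hlast'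
            rw [heqv, birth_move (show d ∈ x from hd) (by rw [hM2]; exact hdy) hM1.1]
            exact ih hyr hlast' d hdy
          · have hb : birth (x :: y :: r) d = x :: y :: r := by
              rw [birth_cons_cons, if_neg hdy]
            rw [hb]

variable (D) in
/-- The branch condition for the automorphism of `Unrav D`. -/
def Cond (t : List (Set V)) (x : List (Set V) × V) : Prop :=
  IsPath D x.1 ∧ x.1.getLast? = t.getLast? ∧ x.2 ∈ x.1.headI ∧ birth x.1 x.2 = x.1

variable (D) in
/-- The automorphism of `Unrav D` induced by the pair of nodes `t`, `t'`. -/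
noncomputable def gmap (t t' : List (Set V)) (x : List (Set V) × V) : List (Set V) × V :=
  if Cond D t x then (birth (hmap D t t' x.1) x.2, x.2)
  else if Cond D t' x then (birth (hmap D t' t x.1) x.2, x.2)
  else x

lemma gmap_snd (t t' : List (Set V)) (x : List (Set V) × V) :
    (gmap D t t' x).2 = x.2 := by
  unfold gmap
  split_ifs <;> rfl

lemma cond_image {t t' : List (Set V)} (ht : IsPath D t) (ht' : IsPath D t')
    (hh : t.headI = t'.headI) {l : List (Set V)} {e : V} (hc : Cond D t (l, e)) :
    Cond D t' (birth (hmap D t t' l) e, e) := by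
  obtain ⟨h1, h2, h3, h4⟩ := hc
  obtain ⟨m1, m2, m3⟩ := hmap_spec ht ht' hh h1 h2
  have hmne : hmap D t t' l ≠ [] := m1.1
  exact ⟨isPath_suffix m1 (birth_suffix _ _) (birth_ne_nil _ hmne),
    (birth_getLast? _ hmne).trans m3,
    birth_headI_mem (by rw [m2]; exact h3), birth_idem _ _⟩

lemma inv_core {t t' : List (Set V)} (ht : IsPath D t) (ht' : IsPath D t')
    (hh : t.headI = t'.headI) {l : List (Set V)} {e : V} (hc : Cond D t (l, e)) :
    (birth (hmap D t' t (birth (hmap D t t' l) e)) e, e) = (l, e) := by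
  obtain ⟨h1, h2, h3, h4⟩ := hc
  obtain ⟨m1, m2, m3⟩ := hmap_spec ht ht' hh h1 h2
  have hB := birth_hmap ht' ht hh.symm (hmap D t t' l) m1 m3 e (by rw [m2]; exact h3)
  rw [← hB, hmap_inv ht ht' hh h1 h2, h4]

lemma gmap_gmap {t t' : List (Set V)} (ht : IsPath D t) (ht' : IsPath D t')
    (hh : t.headI = t'.headI) (x : List (Set V) × V) :
    gmap D t' t (gmap D t t' x) = x := by
  obtain ⟨l, e⟩ := x
  by_cases h1 : Cond D t (l, e)
  · have hin : gmap D t t' (l, e) = (birth (hmap D t t' l) e, e) := by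
      rw [gmap, if_pos h1]
    rw [hin, gmap, if_pos (cond_image ht ht' hh h1)]
    exact inv_core ht ht' hh h1
  · by_cases h2 : Cond D t' (l, e)
    · have hne : t.getLast? ≠ t'.getLast? := by
        intro h
        exact h1 ⟨h2.1, h2.2.1.trans h.symm, h2.2.2⟩
      have hci := cond_image ht' ht hh.symm h2
      have hin : gmap D t t' (l, e) = (birth (hmap D t' t l) e, e) := by
        rw [gmap, if_neg h1, if_pos h2]
      rw [hin, gmap,
        if_neg (fun hcon => hne (hci.2.1.symm.trans hcon.2.1)), if_pos hci]
      exact inv_core ht' ht hh.symm h2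
    · have hin : gmap D t t' (l, e) = (l, e) := by
        rw [gmap, if_neg h1, if_neg h2]
      rw [hin, gmap, if_neg h2, if_neg h1]

lemma gmap_atom {t t' : List (Set V)} (ht : IsPath D t) (ht' : IsPath D t')
    (hh : t.headI = t'.headI) {f : Atm σ (List (Set V) × V)} (hf : f ∈ Unrav D) :
    (⟨f.1, fun i => gmap D t t' (f.2 i)⟩ : Atm σ (List (Set V) × V)) ∈ Unrav D := by
  obtain ⟨sn, R, args, hsp, hD, hargs, hfeq⟩ := hf
  subst hfeq
  have hsne : sn ≠ [] := hsp.1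
  by_cases hc1 : sn.getLast? = t.getLast?
  · obtain ⟨m1, m2, m3⟩ := hmap_spec ht ht' hh hsp hc1
    refine ⟨hmap D t t' sn, R, args, m1, hD, fun i => by rw [m2]; exact hargs i, ?_⟩
    refine congrArg (Sigma.mk R) ?_
    funext i
    show gmap D t t' (birth sn (args i), args i) = _
    have hcd : Cond D t (birth sn (args i), args i) :=
      ⟨isPath_suffix hsp (birth_suffix _ _) (birth_ne_nil _ hsne),
       (birth_getLast? _ hsne).trans hc1, birth_headI_mem (hargs i), birth_idem _ _⟩
    rw [gmap, if_pos hcd]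
    rw [← birth_hmap ht ht' hh sn hsp hc1 (args i) (hargs i)]
  · by_cases hc2 : sn.getLast? = t'.getLast?
    · obtain ⟨m1, m2, m3⟩ := hmap_spec ht' ht hh.symm hsp hc2
      refine ⟨hmap D t' t sn, R, args, m1, hD, fun i => by rw [m2]; exact hargs i, ?_⟩
      refine congrArg (Sigma.mk R) ?_
      funext i
      show gmap D t t' (birth sn (args i), args i) = _
      have hcd : Cond D t' (birth sn (args i), args i) :=
        ⟨isPath_suffix hsp (birth_suffix _ _) (birth_ne_nil _ hsne),
         (birth_getLast? _ hsne).trans hc2, birth_headI_mem (hargs i), birth_idem _ _⟩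
      have hcd1 : ¬ Cond D t (birth sn (args i), args i) := by
        intro hcon
        exact hc1 ((birth_getLast? (args i) hsne).symm.trans hcon.2.1)
      rw [gmap, if_neg hcd1, if_pos hcd]
      rw [← birth_hmap ht' ht hh.symm sn hsp hc2 (args i) (hargs i)]
    · refine ⟨sn, R, args, hsp, hD, hargs, ?_⟩
      refine congrArg (Sigma.mk R) ?_
      funext i
      show gmap D t t' (birth sn (args i), args i) = _
      have hcd1 : ¬ Cond D t (birth sn (args i), args i) := by
        intro hcon
        exact hc1 ((birth_getLast? (args i) hsne).symm.trans hcon.2.1)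
      have hcd2 : ¬ Cond D t' (birth sn (args i), args i) := by
        intro hcon
        exact hc2 ((birth_getLast? (args i) hsne).symm.trans hcon.2.1)
      rw [gmap, if_neg hcd1, if_neg hcd2]

end Aux

/-- In the uGF-unravelling `D^u` of a (finite, nonempty) instance `D`, if `t` and `t'` are
nodes of the unravelling tree with `tail(t) = tail(t')`, then there is an automorphism `g`
of `D^u` (a bijection of its domain preserving atoms in both directions) that maps `bag(t)`
onto `bag(t')` via the canonical isomorphism (sending the copy of `d` in `bag(t)` to the
copy of `d` in `bag(t')`) and satisfies `g(a)↑ = a↑` for every element `a` of `D^u`. -/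


theorem stmt6 {σ : Sig} {V : Type} (D : Interp σ V) (hfin : D.Finite) (hne : D.Nonempty)
    (t t' : List (Set V)) (ht : IsPath D t) (ht' : IsPath D t')
    (htail : t.headI = t'.headI) :
    ∃ g : List (Set V) × V → List (Set V) × V,
      Set.BijOn g (Unrav D).dom (Unrav D).dom ∧
      (∀ f : Atm σ (List (Set V) × V),
        f ∈ Unrav D ↔ (⟨f.1, fun i => g (f.2 i)⟩ : Atm σ (List (Set V) × V)) ∈ Unrav D) ∧
      (∀ x ∈ (Unrav D).dom, (g x).2 = x.2) ∧
      (∀ d ∈ t.headI, g (birth t d, d) = (birth t' d, d)) := by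
  have hgg := gmap_gmap ht ht' htail
  have hgg' := gmap_gmap ht' ht htail.symm
  have hdom : ∀ x ∈ (Unrav D).dom, gmap D t t' x ∈ (Unrav D).dom := by
    rintro x ⟨f, hf, i, rfl⟩
    exact ⟨_, gmap_atom ht ht' htail hf, i, rfl⟩
  have hdom' : ∀ x ∈ (Unrav D).dom, gmap D t' t x ∈ (Unrav D).dom := by
    rintro x ⟨f, hf, i, rfl⟩
    exact ⟨_, gmap_atom ht' ht htail.symm hf, i, rfl⟩
  refine ⟨gmap D t t', ⟨hdom, ?_, ?_⟩, ?_, ?_, ?_⟩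
  · intro a _ b _ h
    have := congrArg (gmap D t' t) h
    rwa [hgg, hgg] at this
  · intro y hy
    exact ⟨gmap D t' t y, hdom' y hy, hgg' y⟩
  · intro f
    constructor
    · exact gmap_atom ht ht' htail
    · intro h
      have h2 := gmap_atom ht' ht htail.symm h
      simp only [hgg] at h2
      exact h2
  · intro x _
    exact gmap_snd t t' x
  · intro d hd
    have hcd : Cond D t (birth t d, d) :=
      ⟨isPath_suffix ht (birth_suffix _ _) (birth_ne_nil _ ht.1),
       birth_getLast? _ ht.1, birth_headI_mem hd, birth_idem _ _⟩
    rw [gmap, if_pos hcd]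
    rw [← birth_hmap ht ht' htail t ht rfl d hd, hmap_self ht]
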